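/- For every positive integer n, the function S(c) = 1 - (n+1)·∫_0^{1/c} (1-cu)^n/(1+u)^{n+2} du satisfies lim_{c→0+} S(c)/c = 1. -/

import Mathlib

open MeasureTheory Filter

lemma key_integral (n : ℕ) (c : ℝ) (hc : 0 < c) :
    (∫ u in (0:ℝ)..(1/c), (1-c*u)^n/(1+u)^(n+2)) = 1/(((n:ℝ)+1)*(1+c)) := by
  have h01 : (0:ℝ) ≤ 1/c := by positivity
  have hn1 : ((n:ℝ)+1) ≠ 0 := by positivity
  have hc1 : (1+c) ≠ 0 := by positivity
  have hderiv : ∀ u ∈ Set.uIcc (0:ℝ) (1/c),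
      HasDerivAt (fun u : ℝ => -((1-c*u)/(1+u))^(n+1)/(((n:ℝ)+1)*(1+c)))
        ((1-c*u)^n/(1+u)^(n+2)) u := by
    intro u hu
    rw [Set.uIcc_of_le h01] at hu
    have h1u : (0:ℝ) < 1 + u := by linarith [hu.1]
    have hg : HasDerivAt (fun u : ℝ => (1-c*u)/(1+u)) (-(1+c)/(1+u)^2) u := by
      have h1 : HasDerivAt (fun u : ℝ => 1-c*u) (-c) u := by
        simpa using ((hasDerivAt_id u).const_mul c).const_sub 1
      have h2 : HasDerivAt (fun u : ℝ => 1+u) 1 u := by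
        simpa using (hasDerivAt_id u).const_add 1
      have := h1.div h2 h1u.ne'
      refine this.congr_deriv ?_
      ring
    have h3 := ((hg.pow (n+1)).neg).div_const (((n:ℝ)+1)*(1+c))
    refine h3.congr_deriv ?_
    simp only [Nat.add_sub_cancel]
    rw [div_pow]
    field_simp
    push_cast
    ring
  have hcont : ContinuousOn (fun u : ℝ => (1-c*u)^n/(1+u)^(n+2)) (Set.uIcc 0 (1/c)) := by
    apply ContinuousOn.div
    · fun_prop
    · fun_prop
    · intro u hu
      rw [Set.uIcc_of_le h01] at hu
      have h1u : (0:ℝ) < 1 + u := by linarith [hu.1]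
      positivity
  rw [intervalIntegral.integral_eq_sub_of_hasDerivAt hderiv
    (hcont.intervalIntegrable)]
  have hcc : 1 - c * (1/c) = 0 := by field_simp; simp
  rw [hcc]
  simp
  field_simp

theorem stmt2 (n : ℕ) (hn : 0 < n) :
    Tendsto (fun c : ℝ =>
        (1 - ((n:ℝ)+1) * ∫ u in (0:ℝ)..(1/c), (1-c*u)^n/(1+u)^(n+2)) / c)
      (nhdsWithin 0 (Set.Ioi 0)) (nhds 1) := by
  have h : ∀ᶠ c in nhdsWithin (0:ℝ) (Set.Ioi 0),
      (1 - ((n:ℝ)+1) * ∫ u in (0:ℝ)..(1/c), (1-c*u)^n/(1+u)^(n+2)) / c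
        = 1/(1+c) := by
    filter_upwards [self_mem_nhdsWithin] with c hc
    have hc : (0:ℝ) < c := hc
    rw [key_integral n c hc]
    have hn1 : ((n:ℝ)+1) ≠ 0 := by positivity
    have hc1 : (1+c) ≠ 0 := by positivity
    field_simp
    ring
  have hT : Tendsto (fun c : ℝ => 1/(1+c)) (nhdsWithin 0 (Set.Ioi 0)) (nhds 1) := by
    have : ContinuousAt (fun c : ℝ => 1/(1+c)) 0 := by
      apply ContinuousAt.div continuousAt_const (by fun_prop)
      norm_num
    have h2 := this.tendsto.mono_left (nhdsWithin_le_nhds (s := Set.Ioi 0))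
    simpa using h2
  exact hT.congr' (h.mono fun c hc => hc.symm)
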